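/- Every greedy ordering b satisfies cost(b) ≤ cost(a) + 1 for every ordering a; in particular, the cost of any greedy ordering exceeds the minimum cost over all orderings by at most 1. -/

import Mathlib

open Finset

set_option maxHeartbeats 1600000

/-- `z1 p a j = ∏_{i=1}^{j-1} p_{a(i)}`: the probability that the first `j-1`
coins in ordering `a` all come up heads. -/
noncomputable def z1 (p : ℕ → ℝ) (a : ℕ → ℕ) (j : ℕ) : ℝ :=
  ∏ i ∈ Finset.Ico 1 j, p (a i)

/-- `z0 p a j = ∏_{i=1}^{j-1} (1 - p_{a(i)})`: the probability that the first `j-1`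
coins in ordering `a` all come up tails. -/
noncomputable def z0 (p : ℕ → ℝ) (a : ℕ → ℕ) (j : ℕ) : ℝ :=
  ∏ i ∈ Finset.Ico 1 j, (1 - p (a i))

/-- `cost n p a = 2 + Σ_{j=3}^{n} (z_j^1(a) + z_j^0(a))`. -/
noncomputable def cost (n : ℕ) (p : ℕ → ℝ) (a : ℕ → ℕ) : ℝ :=
  2 + ∑ j ∈ Finset.Icc 3 n, (z1 p a j + z0 p a j)

/-- An ordering is a permutation of the positions `{1, …, n}`. -/
def IsOrdering (n : ℕ) (a : ℕ → ℕ) : Prop :=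
  Set.BijOn a (Set.Icc 1 n) (Set.Icc 1 n)

/-- An ordering is optimal if it has minimal cost among all orderings. -/
def IsOptimal (n : ℕ) (p : ℕ → ℝ) (a : ℕ → ℕ) : Prop :=
  IsOrdering n a ∧ ∀ b : ℕ → ℕ, IsOrdering n b → cost n p a ≤ cost n p b

/-- `a` is 0-biased at position `j`: `z_j^0(a) > z_j^1(a)`. -/
def ZeroBiased (p : ℕ → ℝ) (a : ℕ → ℕ) (j : ℕ) : Prop := z1 p a j < z0 p a j

/-- `a` is 1-biased at position `j`: `z_j^0(a) < z_j^1(a)`. -/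
def OneBiased (p : ℕ → ℝ) (a : ℕ → ℕ) (j : ℕ) : Prop := z0 p a j < z1 p a j

/-- `a` is unbiased at position `j`: `z_j^0(a) = z_j^1(a)`. -/
def Unbiased (p : ℕ → ℝ) (a : ℕ → ℕ) (j : ℕ) : Prop := z0 p a j = z1 p a j

/-- An ordering `b` is greedy if at every 1-biased position it uses a remaining
coin of smallest heads-probability, and at every other position (0-biased or
unbiased) a remaining coin of largest heads-probability. -/
def IsGreedy (n : ℕ) (p : ℕ → ℝ) (b : ℕ → ℕ) : Prop :=
  IsOrdering n b ∧ ∀ k, 1 ≤ k → k ≤ n →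
    (OneBiased p b k → ∀ j, k ≤ j → j ≤ n → p (b k) ≤ p (b j)) ∧
    (¬ OneBiased p b k → ∀ j, k ≤ j → j ≤ n → p (b j) ≤ p (b k))

namespace GreedyAux

/-! ### Prefix–product sums on lists -/

noncomputable def psum : ℝ → List ℝ → ℝ
  | _, [] => 0
  | u, x :: l => u * x + psum (u * x) l

lemma psum_nil (u : ℝ) : psum u [] = 0 := rfl

lemma psum_cons (u x : ℝ) (l : List ℝ) : psum u (x :: l) = u * x + psum (u * x) l := rfl

lemma psum_smul (l : List ℝ) : ∀ u : ℝ, psum u l = u * psum 1 l := by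
  induction l with
  | nil => intro u; simp [psum]
  | cons x l ih =>
    intro u
    rw [psum_cons, psum_cons, ih (u * x), ih (1 * x)]
    ring

lemma psum_nonneg (l : List ℝ) : ∀ u : ℝ, 0 ≤ u → (∀ y ∈ l, 0 ≤ y) → 0 ≤ psum u l := by
  induction l with
  | nil => intro u _ _; simp [psum]
  | cons x l ih =>
    intro u hu h
    have hx : 0 ≤ x := h x (by simp)
    have := ih (u * x) (mul_nonneg hu hx) (fun y hy => h y (by simp [hy]))
    rw [psum_cons]
    nlinarith [mul_nonneg hu hx]

lemma psum_concat (l : List ℝ) : ∀ (u x : ℝ), psum u (l ++ [x]) = psum u l + u * l.prod * x := by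
  induction l with
  | nil => intro u x; simp [psum]
  | cons y l ih =>
    intro u x
    rw [List.cons_append, psum_cons, ih (u * y) x, psum_cons, List.prod_cons]
    ring

noncomputable def asum (u v : ℝ) (l : List ℝ) : ℝ :=
  psum u l + psum v (l.map (fun y => 1 - y))

lemma asum_nil (u v : ℝ) : asum u v [] = 0 := by simp [asum, psum]

lemma asum_cons (u v x : ℝ) (l : List ℝ) :
    asum u v (x :: l) = (u * x + v * (1 - x)) + asum (u * x) (v * (1 - x)) l := by
  simp only [asum, List.map_cons, psum_cons]
  ring

/-! ### Sorting -/

noncomputable def srt (l : List ℝ) : List ℝ := l.insertionSort (· ≤ ·)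

lemma srt_perm (l : List ℝ) : (srt l).Perm l := List.perm_insertionSort _ l

lemma srt_sorted (l : List ℝ) : List.Pairwise (· ≤ ·) (srt l) := List.pairwise_insertionSort _ l

lemma srt_ne_nil {l : List ℝ} (h : l ≠ []) : srt l ≠ [] := by
  intro h0
  have := (srt_perm l).length_eq
  rw [h0] at this
  exact h (List.length_eq_zero_iff.mp this.symm)

lemma srt_eq_of_perm {l l' : List ℝ} (h : l.Perm l') : srt l = srt l' := by
  apply List.Perm.eq_of_pairwise' (srt_sorted l) (srt_sorted l')
  exact ((srt_perm l).trans h).trans (srt_perm l').symm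

lemma srt_cons_top {x : ℝ} {l : List ℝ} (h : ∀ y ∈ l, y ≤ x) :
    srt (x :: l) = srt l ++ [x] := by
  have hperm : (srt (x :: l)).Perm (srt l ++ [x]) :=
    ((srt_perm _).trans
      (((List.perm_append_singleton x (srt l)).trans ((srt_perm l).cons x)).symm))
  have hsorted : List.Pairwise (· ≤ ·) (srt l ++ [x]) := by
    rw [List.pairwise_append]
    refine ⟨srt_sorted l, List.pairwise_singleton _ _, ?_⟩
    intro a ha b hb
    rw [List.mem_singleton] at hb
    subst hb
    exact h a ((srt_perm l).mem_iff.mp ha)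
  exact List.Perm.eq_of_pairwise' (srt_sorted _) hsorted hperm

lemma srt_cons_bot {x : ℝ} {l : List ℝ} (h : ∀ y ∈ l, x ≤ y) :
    srt (x :: l) = x :: srt l := by
  have hperm : (srt (x :: l)).Perm (x :: srt l) :=
    (srt_perm _).trans ((srt_perm l).cons x).symm
  have hsorted : List.Pairwise (· ≤ ·) (x :: srt l) := by
    rw [List.pairwise_cons]
    exact ⟨fun b hb => h b ((srt_perm l).mem_iff.mp hb), srt_sorted l⟩
  exact List.Perm.eq_of_pairwise' (srt_sorted _) hsorted hperm

lemma headI_mem {l : List ℝ} (h : l ≠ []) : l.headI ∈ l := by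
  cases l with
  | nil => exact absurd rfl h
  | cons a t => simp

lemma headI_le_of_sorted {l : List ℝ} (hs : List.Pairwise (· ≤ ·) l) {y : ℝ} (hy : y ∈ l) :
    l.headI ≤ y := by
  cases l with
  | nil => simp at hy
  | cons a t =>
    rcases List.mem_cons.mp hy with rfl | hyt
    · simp
    · exact List.rel_of_pairwise_cons hs hyt

lemma headI_append {l : List ℝ} (h : l ≠ []) (x : ℝ) : (l ++ [x]).headI = l.headI := by
  cases l with
  | nil => exact absurd rfl h
  | cons a t => simp

noncomputable def mnl (l : List ℝ) : ℝ := (srt l).headI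
noncomputable def mql (l : List ℝ) : ℝ := (srt (l.map (fun y => 1 - y))).headI
noncomputable def sprd (l : List ℝ) : ℝ := 1 - mql l - mnl l

lemma mnl_mem {l : List ℝ} (h : l ≠ []) : mnl l ∈ l :=
  (srt_perm l).mem_iff.mp (headI_mem (srt_ne_nil h))

lemma mnl_le {l : List ℝ} {y : ℝ} (hy : y ∈ l) : mnl l ≤ y :=
  headI_le_of_sorted (srt_sorted l) ((srt_perm l).mem_iff.mpr hy)

lemma mql_mem {l : List ℝ} (h : l ≠ []) : ∃ y ∈ l, mql l = 1 - y := by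
  have hne : l.map (fun y => 1 - y) ≠ [] := by
    cases l with
    | nil => exact absurd rfl h
    | cons a t => simp
  have := (srt_perm (l.map (fun y => 1 - y))).mem_iff.mp (headI_mem (srt_ne_nil hne))
  rcases List.mem_map.mp this with ⟨y, hyl, hy⟩
  exact ⟨y, hyl, hy.symm⟩

lemma mql_le {l : List ℝ} {y : ℝ} (hy : y ∈ l) : mql l ≤ 1 - y :=
  headI_le_of_sorted (srt_sorted _)
    ((srt_perm _).mem_iff.mpr (List.mem_map.mpr ⟨y, hy, rfl⟩))

/-! ### Lower bound: sorting minimizes prefix-product sums -/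

lemma psum_orderedInsert_le (x : ℝ) (hx : 0 ≤ x) :
    ∀ (s : List ℝ), (∀ y ∈ s, 0 ≤ y) → ∀ u : ℝ, 0 ≤ u →
      psum u (List.orderedInsert (· ≤ ·) x s) ≤ psum u (x :: s) := by
  intro s
  induction s with
  | nil => intro _ u _; simp [List.orderedInsert]
  | cons y s ih =>
    intro hs u hu
    by_cases hxy : x ≤ y
    · simp [List.orderedInsert, hxy]
    · have hy : 0 ≤ y := hs y (by simp)
      have hyx : y ≤ x := le_of_not_ge hxy
      simp only [List.orderedInsert, if_neg hxy]
      simp only [psum_cons]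
      have h1 := ih (fun z hz => hs z (by simp [hz])) (u * y) (mul_nonneg hu hy)
      rw [psum_cons] at h1
      have h2 : psum (u * y * x) s = psum (u * x * y) s := by
        rw [psum_smul s (u * y * x), psum_smul s (u * x * y)]; ring
      nlinarith [h2, mul_le_mul_of_nonneg_left hyx hu]

lemma psum_srt_le (l : List ℝ) : (∀ y ∈ l, 0 ≤ y) → ∀ u : ℝ, 0 ≤ u →
    psum u (srt l) ≤ psum u l := by
  induction l with
  | nil => intro _ u _; simp [srt, List.insertionSort]
  | cons x l ih =>
    intro hl u hu
    have hx : 0 ≤ x := hl x (by simp)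
    have hsl : ∀ y ∈ srt l, 0 ≤ y := fun y hy => hl y (by simp [(srt_perm l).mem_iff.mp hy])
    calc psum u (srt (x :: l)) = psum u (List.orderedInsert (· ≤ ·) x (srt l)) := rfl
      _ ≤ psum u (x :: srt l) := psum_orderedInsert_le x hx (srt l) hsl u hu
      _ = u * x + psum (u * x) (srt l) := psum_cons _ _ _
      _ ≤ u * x + psum (u * x) l := by
          have := ih (fun y hy => hl y (by simp [hy])) (u * x) (mul_nonneg hu hx)
          linarith
      _ = psum u (x :: l) := (psum_cons _ _ _).symm

lemma headI_orderedInsert_le (x : ℝ) (s : List ℝ) (hs : ∀ y ∈ s, 0 ≤ y) :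
    (List.orderedInsert (· ≤ ·) x s).headI ≤ x := by
  cases s with
  | nil => simp [List.orderedInsert]
  | cons y t =>
    by_cases hxy : x ≤ y
    · simp [List.orderedInsert, hxy]
    · simp only [List.orderedInsert, if_neg hxy]
      simp only [List.headI]
      linarith [le_of_not_ge hxy]

lemma psum_orderedInsert_headI (x : ℝ) (hx : 0 ≤ x) :
    ∀ (s : List ℝ), (∀ y ∈ s, 0 ≤ y) → ∀ u : ℝ, 0 ≤ u →
      psum u (List.orderedInsert (· ≤ ·) x s) ≤
        u * (List.orderedInsert (· ≤ ·) x s).headI + x * psum u s := by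
  intro s
  induction s with
  | nil => intro _ u _; simp [List.orderedInsert, psum]
  | cons y s ih =>
    intro hs u hu
    have hy : 0 ≤ y := hs y (by simp)
    by_cases hxy : x ≤ y
    · simp only [List.orderedInsert, if_pos hxy]
      rw [psum_cons]
      simp only [List.headI]
      have heq : psum (u * x) (y :: s) = x * psum u (y :: s) := by
        rw [psum_smul (y :: s) (u * x), psum_smul (y :: s) u]; ring
      linarith [heq.le, heq.ge]
    · have hyx : y ≤ x := le_of_not_ge hxy
      simp only [List.orderedInsert, if_neg hxy]
      rw [psum_cons]
      simp only [List.headI]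
      have h1 := ih (fun z hz => hs z (by simp [hz])) (u * y) (mul_nonneg hu hy)
      have h2 : (List.orderedInsert (· ≤ ·) x s).headI ≤ x :=
        headI_orderedInsert_le x s (fun z hz => hs z (by simp [hz]))
      have h3 : u * y * (List.orderedInsert (· ≤ ·) x s).headI ≤ u * y * x :=
        mul_le_mul_of_nonneg_left h2 (mul_nonneg hu hy)
      rw [psum_cons]
      nlinarith

/-- Refined lower bound at the root. -/
lemma asum_lower (x : ℝ) (l : List ℝ) (hx : 0 ≤ x ∧ x ≤ 1)
    (hl : ∀ y ∈ l, 0 ≤ y ∧ y ≤ 1) :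
    psum 1 (srt (x :: l)) + psum 1 (srt ((x :: l).map (fun y => 1 - y))) + sprd (x :: l) ≤
      asum 1 1 (x :: l) := by
  have hl0 : ∀ y ∈ l, 0 ≤ y := fun y hy => (hl y hy).1
  have hml0 : ∀ y ∈ l.map (fun y => 1 - y), 0 ≤ y := by
    intro y hy
    rcases List.mem_map.mp hy with ⟨z, hz, rfl⟩
    linarith [(hl z hz).2]
  have hsl0 : ∀ y ∈ srt l, 0 ≤ y := fun y hy => hl0 y ((srt_perm l).mem_iff.mp hy)
  have hsml0 : ∀ y ∈ srt (l.map (fun y => 1 - y)), 0 ≤ y :=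
    fun y hy => hml0 y ((srt_perm _).mem_iff.mp hy)
  -- upper bounds on the two sorted psums
  have hA : psum 1 (srt (x :: l)) ≤ 1 * (srt (x :: l)).headI + x * psum 1 (srt l) := by
    have : srt (x :: l) = List.orderedInsert (· ≤ ·) x (srt l) := rfl
    rw [this]
    exact psum_orderedInsert_headI x hx.1 (srt l) hsl0 1 zero_le_one
  have hB : psum 1 (srt ((x :: l).map (fun y => 1 - y))) ≤
      1 * (srt ((x :: l).map (fun y => 1 - y))).headI +
        (1 - x) * psum 1 (srt (l.map (fun y => 1 - y))) := by
    have e1 : (x :: l).map (fun y => 1 - y) = (1 - x) :: l.map (fun y => 1 - y) := by simp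
    have e2 : srt ((1 - x) :: l.map (fun y => 1 - y)) =
        List.orderedInsert (· ≤ ·) (1 - x) (srt (l.map (fun y => 1 - y))) := rfl
    rw [e1, e2]
    exact psum_orderedInsert_headI (1 - x) (by linarith [hx.2]) _ hsml0 1 zero_le_one
  -- lower bound on asum
  have hlow : 1 + x * psum 1 (srt l) + (1 - x) * psum 1 (srt (l.map (fun y => 1 - y))) ≤
      asum 1 1 (x :: l) := by
    rw [asum_cons]
    have e1 : asum (1 * x) (1 * (1 - x)) l =
        psum (1 * x) l + psum (1 * (1 - x)) (l.map (fun y => 1 - y)) := rfl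
    rw [e1]
    have h1 : psum (1 * x) (srt l) ≤ psum (1 * x) l :=
      psum_srt_le l hl0 (1 * x) (by linarith [hx.1])
    have h2 : psum (1 * (1 - x)) (srt (l.map (fun y => 1 - y))) ≤
        psum (1 * (1 - x)) (l.map (fun y => 1 - y)) :=
      psum_srt_le _ hml0 (1 * (1 - x)) (by linarith [hx.2])
    have e2 : psum (1 * x) (srt l) = x * psum 1 (srt l) := by rw [psum_smul]; ring
    have e3 : psum (1 * (1 - x)) (srt (l.map (fun y => 1 - y))) =
        (1 - x) * psum 1 (srt (l.map (fun y => 1 - y))) := by rw [psum_smul]; ring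
    nlinarith [h1, h2]
  have hsprd : sprd (x :: l) = 1 - (srt ((x :: l).map (fun y => 1 - y))).headI -
      (srt (x :: l)).headI := rfl
  nlinarith [hA, hB, hlow]

/-! ### The core scalar inequality -/

lemma CSIpoly (x mn : ℝ) (h0 : 0 ≤ mn) (h1 : mn ≤ x) (h2 : x ≤ 1) :
    (1 - x) * (2 * x - 1) * (1 - mn) ≤ x ^ 2 * (x - mn) * (1 - mn) + mn * (1 - x) ^ 2 := by
  nlinarith [sq_nonneg ((x - mn) * x - (1 - x) ^ 2 / 2),
    mul_nonneg (mul_nonneg (mul_nonneg (sub_nonneg.mpr h2) (sub_nonneg.mpr h2))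
      (sub_nonneg.mpr h2)) (by linarith : (0:ℝ) ≤ 3 + x)]

lemma Tlow (x mn c : ℝ) (hx1 : x ≤ 1) (hmn0 : 0 ≤ mn) (hc0 : 0 ≤ c) (hcx : c ≤ x)
    (hc : c * (1 - mn) ≤ mn * (1 - x)) :
    ∀ s : List ℝ, (∀ y ∈ s, mn ≤ y) → c ≤ x * s.prod + (1 - x) * psum 1 s := by
  intro s
  induction s with
  | nil => intro _; simp [psum]; linarith
  | cons y s ih =>
    intro hs
    have hy : mn ≤ y := hs y (by simp)
    have hT := ih (fun z hz => hs z (by simp [hz]))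
    have hps : psum 1 (y :: s) = y + y * psum 1 s := by
      rw [psum_cons, psum_smul]; ring
    rw [List.prod_cons, hps]
    -- target: c ≤ x*(y*prod) + (1-x)*(y + y*psum) = y*((1-x) + (x*prod + (1-x)*psum))
    nlinarith [mul_le_mul_of_nonneg_left (by linarith : (1 - x) + c ≤ (1 - x) + (x * s.prod + (1 - x) * psum 1 s)) (le_trans hmn0 hy),
      mul_le_mul_of_nonneg_right hy (by linarith : (0:ℝ) ≤ (1 - x) + c)]

lemma Ecore (u v x mn SA PL spr : ℝ) (hu : 0 ≤ u) (huv : u ≤ v) (hx0 : 0 ≤ x) (hx1 : x ≤ 1)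
    (hmn0 : 0 ≤ mn) (hmnx : mn ≤ x) (hSA : 0 ≤ SA) (hPL : 0 ≤ PL) (hspr : spr ≤ x - mn)
    (hT : ∀ c, 0 ≤ c → c ≤ x → c * (1 - mn) ≤ mn * (1 - x) → c ≤ x * PL + (1 - x) * SA) :
    u * x + u * x * SA + min (u * x) (v * (1 - x)) + max (u * x) (v * (1 - x)) * spr ≤
      u * SA + u * x * PL + u + v * (x - mn) := by
  have hv : 0 ≤ v := hu.trans huv
  have hT0 : 0 ≤ x * PL + (1 - x) * SA :=
    add_nonneg (mul_nonneg hx0 hPL) (mul_nonneg (by linarith) hSA)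
  have hmn1 : mn ≤ 1 := hmnx.trans hx1
  rcases le_total (u * x) (v * (1 - x)) with hcase | hcase
  · -- case (ii): min = u*x, max = v*(1-x)
    rw [min_eq_left hcase, max_eq_right hcase]
    have h1 : v * (1 - x) * spr ≤ v * (1 - x) * (x - mn) :=
      mul_le_mul_of_nonneg_left hspr (mul_nonneg hv (by linarith))
    have key : u * (2 * x - 1) ≤ v * x * (x - mn) + u * (x * PL + (1 - x) * SA) := by
      rcases le_or_gt x (1 / 2) with hx2 | hx2
      · nlinarith [mul_nonneg (mul_nonneg hv hx0) (by linarith : (0:ℝ) ≤ x - mn),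
          mul_nonneg hu hT0]
      · rcases eq_or_lt_of_le hmn1 with hmn1' | hmn1'
        · -- mn = 1, hence x = 1
          have hx1' : x = 1 := le_antisymm hx1 (by rw [← hmn1']; exact hmnx)
          subst hx1'
          have hT1 : (1:ℝ) ≤ 1 * PL + (1 - 1) * SA := by
            apply hT 1 zero_le_one le_rfl
            have hmn1'' : mn = 1 := hmn1'
            rw [hmn1'']
          nlinarith [mul_le_mul_of_nonneg_left hT1 hu, hv, hmn1']
        · -- mn < 1
          have h1mn : (0:ℝ) < 1 - mn := by linarith
          set c := mn * (1 - x) / (1 - mn) with hc_def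
          have hceq : c * (1 - mn) = mn * (1 - x) := div_mul_cancel₀ _ (ne_of_gt h1mn)
          have hc0 : 0 ≤ c := div_nonneg (mul_nonneg hmn0 (by linarith)) h1mn.le
          have hcx : c ≤ x := by
            rw [div_le_iff₀ h1mn]; nlinarith
          have hTc : c ≤ x * PL + (1 - x) * SA := hT c hc0 hcx (le_of_eq hceq)
          rcases le_or_gt (2 * x - 1) c with h2 | h2
          · nlinarith [mul_le_mul_of_nonneg_left (h2.trans hTc) hu,
              mul_nonneg (mul_nonneg hv hx0) (by linarith : (0:ℝ) ≤ x - mn)]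
          · have keyp : (1 - x) * (2 * x - 1 - c) ≤ x ^ 2 * (x - mn) := by
              have hP := CSIpoly x mn hmn0 hmnx hx1
              have h3 : (1 - x) * (2 * x - 1 - c) * (1 - mn) ≤ x ^ 2 * (x - mn) * (1 - mn) := by
                nlinarith [hP, hceq]
              exact le_of_mul_le_mul_right h3 h1mn
            have hx0' : 0 < x := by linarith
            have step : u * x * (2 * x - 1 - c) ≤ v * (1 - x) * (2 * x - 1 - c) :=
              mul_le_mul_of_nonneg_right hcase (by linarith)
            have step2 : v * ((1 - x) * (2 * x - 1 - c)) ≤ v * (x ^ 2 * (x - mn)) :=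
              mul_le_mul_of_nonneg_left keyp hv
            have step3 : u * (2 * x - 1 - c) ≤ v * x * (x - mn) := by
              have h4 : u * (2 * x - 1 - c) * x ≤ v * x * (x - mn) * x := by nlinarith
              exact le_of_mul_le_mul_right h4 hx0'
            nlinarith [mul_le_mul_of_nonneg_left hTc hu]
    nlinarith [h1, key]
  · -- case (i): min = v*(1-x), max = u*x
    rw [min_eq_right hcase, max_eq_left hcase]
    have h1 : u * x * spr ≤ u * x * (x - mn) :=
      mul_le_mul_of_nonneg_left hspr (mul_nonneg hu hx0)
    -- hCSIT : (1-x)(2x-1) ≤ x²(x-mn) + T(1-x)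
    have hCSIT : (1 - x) * (2 * x - 1) ≤ x ^ 2 * (x - mn) + (x * PL + (1 - x) * SA) * (1 - x) := by
      rcases le_or_gt x (1 / 2) with hx2 | hx2
      · nlinarith [mul_nonneg (mul_nonneg hx0 hx0) (by linarith : (0:ℝ) ≤ x - mn),
          mul_nonneg hT0 (by linarith : (0:ℝ) ≤ 1 - x)]
      · rcases eq_or_lt_of_le hx1 with hx1' | hx1'
        · rw [hx1']
          nlinarith [mul_nonneg (by norm_num : (0:ℝ) ≤ 1) (by linarith : (0:ℝ) ≤ 1 - mn)]
        · have hmn1' : mn < 1 := lt_of_le_of_lt hmnx hx1'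
          have h1mn : (0:ℝ) < 1 - mn := by linarith
          set c := mn * (1 - x) / (1 - mn) with hc_def
          have hceq : c * (1 - mn) = mn * (1 - x) := div_mul_cancel₀ _ (ne_of_gt h1mn)
          have hc0 : 0 ≤ c := div_nonneg (mul_nonneg hmn0 (by linarith)) h1mn.le
          have hcx : c ≤ x := by
            rw [div_le_iff₀ h1mn]; nlinarith
          have hTc : c ≤ x * PL + (1 - x) * SA := hT c hc0 hcx (le_of_eq hceq)
          have hP := CSIpoly x mn hmn0 hmnx hx1
          have h3 : (1 - x) * (2 * x - 1) * (1 - mn) ≤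
              (x ^ 2 * (x - mn) + c * (1 - x)) * (1 - mn) := by
            nlinarith [hP, hceq]
          have h4 : (1 - x) * (2 * x - 1) ≤ x ^ 2 * (x - mn) + c * (1 - x) :=
            le_of_mul_le_mul_right h3 h1mn
          nlinarith [mul_le_mul_of_nonneg_right hTc (by linarith : (0:ℝ) ≤ 1 - x)]
    have key : (1 - x) * v - (1 - x) * u ≤
        (v - u * x) * (x - mn) + (u * x * PL + u * SA - u * x * SA) := by
      rcases le_or_gt (1 - x) (x - mn) with hco | hco
      · have e1 : (1 - x) * (v - u) ≤ (x - mn) * (v - u) :=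
          mul_le_mul_of_nonneg_right hco (by linarith)
        have e2 : (x - mn) * (v - u) ≤ (x - mn) * (v - u * x) := by
          apply mul_le_mul_of_nonneg_left _ (by linarith)
          nlinarith
        nlinarith [mul_nonneg hu hT0]
      · rcases eq_or_lt_of_le hx1 with hx1' | hx1'
        · rw [hx1'] at *
          nlinarith [mul_nonneg hu hT0, mul_nonneg (by linarith : (0:ℝ) ≤ v - u)
            (by linarith : (0:ℝ) ≤ 1 - mn)]
        · have hb : (0:ℝ) < 1 - x := by linarith
          have t1 : 0 ≤ (u * x - v * (1 - x)) * ((1 - x) - (x - mn)) :=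
            mul_nonneg (by linarith) (by linarith)
          have t2 : 0 ≤ u * (x ^ 2 * (x - mn) + (x * PL + (1 - x) * SA) * (1 - x) -
              (1 - x) * (2 * x - 1)) := mul_nonneg hu (by linarith [hCSIT])
          have h5 : ((v - u * x) * (x - mn) + (u * x * PL + u * SA - u * x * SA) -
                ((1 - x) * v - (1 - x) * u)) * (1 - x) =
              (u * x - v * (1 - x)) * ((1 - x) - (x - mn)) +
                u * (x ^ 2 * (x - mn) + (x * PL + (1 - x) * SA) * (1 - x) -
                  (1 - x) * (2 * x - 1)) := by ring
          have h6 : 0 ≤ ((v - u * x) * (x - mn) + (u * x * PL + u * SA - u * x * SA) -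
              ((1 - x) * v - (1 - x) * u)) * (1 - x) := by rw [h5]; linarith
          nlinarith [le_of_mul_le_mul_right (by linarith [h6] :
            (0:ℝ) * (1 - x) ≤ ((v - u * x) * (x - mn) + (u * x * PL + u * SA - u * x * SA) -
              ((1 - x) * v - (1 - x) * u)) * (1 - x)) hb]
    nlinarith [h1, key]

/-! ### Greedy lists and the upper bound -/

def GreedyL : ℝ → ℝ → List ℝ → Prop
  | _, _, [] => True
  | u, v, x :: l =>
    ((v < u → ∀ y ∈ l, x ≤ y) ∧ (¬ v < u → ∀ y ∈ l, y ≤ x)) ∧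
      GreedyL (u * x) (v * (1 - x)) l

lemma greedy_upper : ∀ (l : List ℝ) (u v : ℝ), 0 ≤ u → 0 ≤ v →
    (∀ y ∈ l, 0 ≤ y ∧ y ≤ 1) → GreedyL u v l →
    asum u v l ≤ psum u (srt l) + psum v (srt (l.map (fun y => 1 - y))) +
      min u v + max u v * sprd l := by
  intro l
  induction l with
  | nil =>
    intro u v hu hv _ _
    have hd : (default : ℝ) = 0 := rfl
    have h1 : sprd ([] : List ℝ) = 1 := by
      simp [sprd, mql, mnl, srt, List.insertionSort, List.headI, hd]
    rw [asum_nil, h1]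
    simp only [srt, List.insertionSort, List.foldr, List.map_nil, psum_nil, mul_one]
    nlinarith [le_min hu hv, le_trans hu (le_max_left u v)]
  | cons x l ih =>
    intro u v hu hv hent hg
    obtain ⟨⟨hg1, hg2⟩, hgrec⟩ := hg
    have hx := hent x (by simp)
    have hlent : ∀ y ∈ l, 0 ≤ y ∧ y ≤ 1 := fun y hy => hent y (by simp [hy])
    have hux : 0 ≤ u * x := mul_nonneg hu hx.1
    have hvx : 0 ≤ v * (1 - x) := mul_nonneg hv (by linarith [hx.2])
    have IH := ih (u * x) (v * (1 - x)) hux hvx hlent hgrec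
    rcases List.eq_nil_or_concat' l with rfl | hlne
    · -- singleton case
      have e1 : srt [x] = [x] := rfl
      have e2 : ([x] : List ℝ).map (fun y => 1 - y) = [1 - x] := rfl
      have e3 : srt [1 - x] = [1 - x] := rfl
      have e4 : sprd [x] = 0 := by
        unfold sprd mql mnl
        rw [e2, e3, e1]
        simp only [List.headI]
        ring
      rw [asum_cons, asum_nil, e4, e2, e1, e3]
      simp only [psum_cons, psum_nil, add_zero, mul_zero, mul_one]
      nlinarith [le_min hu hv, le_trans hu (le_max_left u v)]
    · have hne : l ≠ [] := by
        rcases hlne with ⟨l', a, rfl⟩; simp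
      clear hlne
      -- common facts
      have hmnl_mem : mnl l ∈ l := mnl_mem hne
      have hmnl := hent (mnl l) (by simp [hmnl_mem])
      obtain ⟨y0, hy0l, hy0⟩ := mql_mem hne
      have hy0b := hent y0 (by simp [hy0l])
      have hq0 : 0 ≤ mql l := by rw [hy0]; linarith [hy0b.2]
      have hsrtl_ne : srt l ≠ [] := srt_ne_nil hne
      have hsrtml_ne : srt (l.map (fun y => 1 - y)) ≠ [] := by
        apply srt_ne_nil
        cases l with
        | nil => exact absurd rfl hne
        | cons a t => simp
      have hml0 : ∀ y ∈ l.map (fun y => 1 - y), 0 ≤ y := by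
        intro y hy
        rcases List.mem_map.mp hy with ⟨z, hz, rfl⟩
        linarith [(hlent z hz).2]
      have hl0 : ∀ y ∈ l, 0 ≤ y := fun y hy => (hlent y hy).1
      have hSA0 : 0 ≤ psum 1 (srt l) :=
        psum_nonneg _ 1 zero_le_one (fun y hy => hl0 y ((srt_perm l).mem_iff.mp hy))
      have hSB0 : 0 ≤ psum 1 (srt (l.map (fun y => 1 - y))) :=
        psum_nonneg _ 1 zero_le_one (fun y hy => hml0 y ((srt_perm _).mem_iff.mp hy))
      have hPL0 : 0 ≤ l.prod := List.prod_nonneg hl0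
      have hQL0 : 0 ≤ (l.map (fun y => 1 - y)).prod := List.prod_nonneg hml0
      have hsrtl_prod : (srt l).prod = l.prod := (srt_perm l).prod_eq
      have hsrtml_prod : (srt (l.map (fun y => 1 - y))).prod = (l.map (fun y => 1 - y)).prod :=
        (srt_perm _).prod_eq
      by_cases hvu : v < u
      · -- BOTTOM pick: x is the minimum
        have hmin : ∀ y ∈ l, x ≤ y := hg1 hvu
        have hminm : ∀ y ∈ l.map (fun y => 1 - y), y ≤ 1 - x := by
          intro y hy
          rcases List.mem_map.mp hy with ⟨z, hz, rfl⟩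
          linarith [hmin z hz]
        have e1 : srt (x :: l) = x :: srt l := srt_cons_bot hmin
        have e2 : (x :: l).map (fun y => 1 - y) = (1 - x) :: l.map (fun y => 1 - y) := by simp
        have e3 : srt ((1 - x) :: l.map (fun y => 1 - y)) =
            srt (l.map (fun y => 1 - y)) ++ [1 - x] := srt_cons_top hminm
        have hmnl_cons : mnl (x :: l) = x := by
          unfold mnl
          rw [e1]
          rfl
        have hmql_cons : mql (x :: l) = mql l := by
          unfold mql
          rw [e2, e3]
          exact headI_append hsrtml_ne (1 - x)
        have hsprd_cons : sprd (x :: l) = (1 - x) - mql l := by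
          unfold sprd
          rw [hmnl_cons, hmql_cons]
          ring
        have hsprd_l : sprd l ≤ (1 - x) - mql l := by
          simp only [sprd]
          have : x ≤ mnl l := hmin _ hmnl_mem
          linarith
      -- Ecore applied with roles swapped
        have hEc := Ecore v u (1 - x) (mql l) (psum 1 (srt (l.map (fun y => 1 - y))))
          (l.map (fun y => 1 - y)).prod (sprd l) hv (le_of_lt hvu) (by linarith [hx.2])
          (by linarith [hx.1]) hq0 (by rw [hy0]; linarith [hmin y0 hy0l]) hSB0 hQL0
          (by linarith [hsprd_l])
          (by
            intro c hc0 hcx hcc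
            have := Tlow (1 - x) (mql l) c (by linarith [hx.1]) hq0 hc0 hcx hcc
              (srt (l.map (fun y => 1 - y)))
              (fun y hy => headI_le_of_sorted (srt_sorted _) hy)
            rw [hsrtml_prod] at this
            exact this)
        rw [asum_cons, e2, e1, e3]
        rw [psum_cons, psum_concat, psum_smul (srt l) (u * x),
          psum_smul (srt (l.map (fun y => 1 - y))) v, hsrtml_prod]
        rw [min_eq_right (le_of_lt hvu), max_eq_left (le_of_lt hvu), hsprd_cons]
        rw [psum_smul (srt l) (u * x), psum_smul (srt (l.map (fun y => 1 - y))) (v * (1 - x))]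
          at IH
        -- combine IH and hEc
        have hminmax : min (v * (1 - x)) (u * (1 - (1 - x))) = min (u * x) (v * (1 - x)) ∧
            max (v * (1 - x)) (u * (1 - (1 - x))) = max (u * x) (v * (1 - x)) := by
          constructor
          · rw [min_comm]; congr 1; ring
          · rw [max_comm]; congr 1; ring
        rw [hminmax.1, hminmax.2] at hEc
        nlinarith [IH, hEc]
      · -- TOP pick: x is the maximum
        have hmax : ∀ y ∈ l, y ≤ x := hg2 hvu
        have huv : u ≤ v := le_of_not_gt hvu
        have hmaxm : ∀ y ∈ l.map (fun y => 1 - y), 1 - x ≤ y := by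
          intro y hy
          rcases List.mem_map.mp hy with ⟨z, hz, rfl⟩
          linarith [hmax z hz]
        have e1 : srt (x :: l) = srt l ++ [x] := srt_cons_top hmax
        have e2 : (x :: l).map (fun y => 1 - y) = (1 - x) :: l.map (fun y => 1 - y) := by simp
        have e3 : srt ((1 - x) :: l.map (fun y => 1 - y)) =
            (1 - x) :: srt (l.map (fun y => 1 - y)) := srt_cons_bot hmaxm
        have hmnl_cons : mnl (x :: l) = mnl l := by
          unfold mnl
          rw [e1]
          exact headI_append hsrtl_ne x
        have hmql_cons : mql (x :: l) = 1 - x := by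
          unfold mql
          rw [e2, e3]
          rfl
        have hsprd_cons : sprd (x :: l) = x - mnl l := by
          unfold sprd
          rw [hmnl_cons, hmql_cons]
          ring
        have hsprd_l : sprd l ≤ x - mnl l := by
          simp only [sprd]
          have h6 : mql l = 1 - y0 := hy0
          have : y0 ≤ x := hmax y0 hy0l
          rw [h6]; linarith
        have hEc := Ecore u v x (mnl l) (psum 1 (srt l)) l.prod (sprd l) hu huv hx.1 hx.2
          hmnl.1 (hmax _ hmnl_mem) hSA0 hPL0 hsprd_l
          (by
            intro c hc0 hcx hcc
            have := Tlow x (mnl l) c hx.2 hmnl.1 hc0 hcx hcc (srt l)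
              (fun y hy => headI_le_of_sorted (srt_sorted _) hy)
            rw [hsrtl_prod] at this
            exact this)
        rw [asum_cons, e2, e1, e3]
        rw [psum_concat, psum_cons, psum_smul (srt l) u,
          psum_smul (srt (l.map (fun y => 1 - y))) (v * (1 - x)), hsrtl_prod]
        rw [min_eq_left huv, max_eq_right huv, hsprd_cons]
        rw [psum_smul (srt l) (u * x), psum_smul (srt (l.map (fun y => 1 - y))) (v * (1 - x))]
          at IH
        nlinarith [IH, hEc]

/-- Main list-level comparison. -/
lemma main_list (lb la : List ℝ) (hperm : la.Perm lb) (hne : lb ≠ [])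
    (hent : ∀ y ∈ lb, 0 ≤ y ∧ y ≤ 1) (hg : GreedyL 1 1 lb) :
    asum 1 1 lb ≤ asum 1 1 la + 1 := by
  have hup := greedy_upper lb 1 1 zero_le_one zero_le_one hent hg
  have hane : la ≠ [] := by
    intro h; rw [h] at hperm
    exact hne (hperm.symm.eq_nil)
  obtain ⟨x, l, rfl⟩ : ∃ x l, la = x :: l := by
    cases la with
    | nil => exact absurd rfl hane
    | cons x l => exact ⟨x, l, rfl⟩
  have hentla : ∀ y ∈ (x :: l), 0 ≤ y ∧ y ≤ 1 := fun y hy => hent y (hperm.mem_iff.mp hy)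
  have hlow := asum_lower x l (hentla x (by simp)) (fun y hy => hentla y (by simp [hy]))
  have hsrteq : srt (x :: l) = srt lb := srt_eq_of_perm hperm
  have hsrtmeq : srt ((x :: l).map (fun y => 1 - y)) = srt (lb.map (fun y => 1 - y)) :=
    srt_eq_of_perm (hperm.map _)
  have hsprdeq : sprd (x :: l) = sprd lb := by
    unfold sprd mnl mql
    rw [hsrteq, hsrtmeq]
  rw [hsrteq, hsrtmeq, hsprdeq] at hlow
  simp only [min_self, max_self, one_mul] at hup
  linarith

/-! ### Translation between `cost` and list sums -/

lemma psum_range' (f : ℕ → ℝ) :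
    ∀ (m s : ℕ) (u : ℝ), psum u ((List.range' s m).map f) =
      ∑ k ∈ Finset.range m, u * (∏ i ∈ Finset.Ico s (s + k + 1), f i) := by
  intro m
  induction m with
  | zero => intro s u; simp [psum]
  | succ m ih =>
    intro s u
    rw [List.range'_succ, List.map_cons, psum_cons, Finset.sum_range_succ']
    rw [ih (s + 1) (u * f s)]
    have h0 : Finset.Ico s (s + 0 + 1) = {s} := by
      rw [show s + 0 + 1 = s + 1 from rfl, Nat.Ico_succ_singleton]
    rw [h0, Finset.prod_singleton, add_comm]
    congr 1
    apply Finset.sum_congr rfl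
    intro k _
    have hlt : s < s + k + 2 := by omega
    have e1 : s + (k + 1) + 1 = s + k + 2 := by omega
    have e2 : s + 1 + k + 1 = s + k + 2 := by omega
    rw [e1, e2, Finset.prod_eq_prod_Ico_succ_bot hlt]
    ring

/-- The coin list of an ordering. -/
noncomputable def coinList (n : ℕ) (p : ℕ → ℝ) (x : ℕ → ℕ) : List ℝ :=
  (List.range' 1 n).map (fun i => p (x i))

lemma z1_succ (p : ℕ → ℝ) (x : ℕ → ℕ) (k : ℕ) (hk : 1 ≤ k) :
    z1 p x (k + 1) = z1 p x k * p (x k) := by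
  simp only [z1]
  exact Finset.prod_Ico_succ_top hk _

lemma z0_succ (p : ℕ → ℝ) (x : ℕ → ℕ) (k : ℕ) (hk : 1 ≤ k) :
    z0 p x (k + 1) = z0 p x k * (1 - p (x k)) := by
  simp only [z0]
  exact Finset.prod_Ico_succ_top hk _

lemma psum_coinList (n : ℕ) (p : ℕ → ℝ) (x : ℕ → ℕ) :
    psum 1 (coinList n p x) = ∑ k ∈ Finset.range n, z1 p x (k + 2) := by
  rw [coinList, psum_range']
  apply Finset.sum_congr rfl
  intro k _
  rw [one_mul]
  simp only [z1]
  rw [show 1 + k + 1 = k + 2 by omega]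

lemma psum_coinList' (n : ℕ) (p : ℕ → ℝ) (x : ℕ → ℕ) :
    psum 1 ((coinList n p x).map (fun y => 1 - y)) =
      ∑ k ∈ Finset.range n, z0 p x (k + 2) := by
  rw [coinList, List.map_map]
  have : ((fun y => 1 - y) ∘ fun i => p (x i)) = fun i => 1 - p (x i) := rfl
  rw [this, psum_range']
  apply Finset.sum_congr rfl
  intro k _
  rw [one_mul]
  simp only [z0]
  rw [show 1 + k + 1 = k + 2 by omega]

lemma sum_shift (g : ℕ → ℝ) (m : ℕ) :
    ∑ k ∈ Finset.range (m + 2), g (k + 2) =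
      g 2 + (∑ j ∈ Finset.Icc 3 (m + 2), g j) + g (m + 3) := by
  have h1 : ∑ j ∈ Finset.Icc 3 (m + 2), g j = ∑ k ∈ Finset.range m, g (3 + k) := by
    have := Finset.sum_Ico_eq_sum_range g 3 (m + 3)
    rw [show Finset.Icc 3 (m + 2) = Finset.Ico 3 (m + 3) from (Finset.Ico_add_one_right_eq_Icc 3 (m+2)).symm]
    rw [this]
    norm_num
  rw [Finset.sum_range_succ, Finset.sum_range_succ', h1]
  have e : ∀ k, g (k + 1 + 2) = g (3 + k) := fun k => by rw [show k + 1 + 2 = 3 + k by omega]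
  simp only [e, show (0:ℕ) + 2 = 2 from rfl, show m + 1 + 2 = m + 3 from rfl]
  ring

lemma cost_eq_asum (n : ℕ) (hn : 2 ≤ n) (p : ℕ → ℝ) (x : ℕ → ℕ) :
    cost n p x = 1 + asum 1 1 (coinList n p x) - (z1 p x (n + 1) + z0 p x (n + 1)) := by
  obtain ⟨m, rfl⟩ : ∃ m, n = m + 2 := ⟨n - 2, by omega⟩
  have hz12 : z1 p x 2 + z0 p x 2 = 1 := by
    simp only [z1, z0]
    rw [show (2:ℕ) = 1 + 1 from rfl, Nat.Ico_succ_singleton, Finset.prod_singleton,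
      Finset.prod_singleton]
    ring
  have ha : asum 1 1 (coinList (m + 2) p x) =
      (∑ k ∈ Finset.range (m + 2), z1 p x (k + 2)) +
        (∑ k ∈ Finset.range (m + 2), z0 p x (k + 2)) := by
    rw [asum, psum_coinList, psum_coinList']
  rw [ha, sum_shift (fun j => z1 p x j) m, sum_shift (fun j => z0 p x j) m]
  simp only [cost]
  rw [Finset.sum_add_distrib]
  have : m + 3 = m + 2 + 1 := by omega
  rw [this] at *
  linarith [hz12]

lemma endterm_eq (n : ℕ) (p : ℕ → ℝ) (x : ℕ → ℕ) (hx : IsOrdering n x) :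
    z1 p x (n + 1) = ∏ i ∈ Finset.Icc 1 n, p i := by
  simp only [z1]
  rw [show Finset.Ico 1 (n + 1) = Finset.Icc 1 n from Finset.Ico_add_one_right_eq_Icc 1 n]
  apply Finset.prod_bij (fun a _ => x a)
  · intro a ha
    rw [Finset.mem_Icc] at ha ⊢
    have := hx.mapsTo (by rw [Set.mem_Icc]; exact ha)
    rwa [Set.mem_Icc] at this
  · intro a1 ha1 a2 ha2 h
    rw [Finset.mem_Icc] at ha1 ha2
    exact hx.injOn (by rw [Set.mem_Icc]; exact ha1) (by rw [Set.mem_Icc]; exact ha2) h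
  · intro b hb
    rw [Finset.mem_Icc] at hb
    obtain ⟨a, ha, hab⟩ := hx.surjOn (by rw [Set.mem_Icc]; exact hb)
    rw [Set.mem_Icc] at ha
    exact ⟨a, Finset.mem_Icc.mpr ha, hab⟩
  · intro a _
    rfl

lemma endterm_eq' (n : ℕ) (p : ℕ → ℝ) (x : ℕ → ℕ) (hx : IsOrdering n x) :
    z0 p x (n + 1) = ∏ i ∈ Finset.Icc 1 n, (1 - p i) := by
  simp only [z0]
  rw [show Finset.Ico 1 (n + 1) = Finset.Icc 1 n from Finset.Ico_add_one_right_eq_Icc 1 n]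
  apply Finset.prod_bij (fun a _ => x a)
  · intro a ha
    rw [Finset.mem_Icc] at ha ⊢
    have := hx.mapsTo (by rw [Set.mem_Icc]; exact ha)
    rwa [Set.mem_Icc] at this
  · intro a1 ha1 a2 ha2 h
    rw [Finset.mem_Icc] at ha1 ha2
    exact hx.injOn (by rw [Set.mem_Icc]; exact ha1) (by rw [Set.mem_Icc]; exact ha2) h
  · intro b hb
    rw [Finset.mem_Icc] at hb
    obtain ⟨a, ha, hab⟩ := hx.surjOn (by rw [Set.mem_Icc]; exact hb)
    rw [Set.mem_Icc] at ha
    exact ⟨a, Finset.mem_Icc.mpr ha, hab⟩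
  · intro a _
    rfl

lemma coinList_perm (n : ℕ) (p : ℕ → ℝ) (a b : ℕ → ℕ)
    (ha : IsOrdering n a) (hb : IsOrdering n b) :
    (coinList n p a).Perm (coinList n p b) := by
  have hmem : ∀ (x : ℕ → ℕ), IsOrdering n x → ∀ y,
      (y ∈ (List.range' 1 n).map x ↔ 1 ≤ y ∧ y ≤ n) := by
    intro x hx y
    constructor
    · intro hy
      rcases List.mem_map.mp hy with ⟨i, hi, rfl⟩
      rw [List.mem_range'_1] at hi
      have := hx.mapsTo (x := i) (by rw [Set.mem_Icc]; omega)
      rw [Set.mem_Icc] at this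
      exact this
    · intro hy
      obtain ⟨i, hi, hix⟩ := hx.surjOn (by rw [Set.mem_Icc]; exact hy)
      rw [Set.mem_Icc] at hi
      exact List.mem_map.mpr ⟨i, List.mem_range'_1.mpr (by omega), hix⟩
  have hnodup : ∀ (x : ℕ → ℕ), IsOrdering n x → ((List.range' 1 n).map x).Nodup := by
    intro x hx
    apply List.Nodup.map_on _ (List.nodup_range' (s := 1) (n := n))
    intro i hi j hj hij
    rw [List.mem_range'_1] at hi hj
    exact hx.injOn (by rw [Set.mem_Icc]; omega) (by rw [Set.mem_Icc]; omega) hij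
  have hperm : ((List.range' 1 n).map a).Perm ((List.range' 1 n).map b) := by
    rw [← Multiset.coe_eq_coe]
    rw [Multiset.Nodup.ext (by rw [Multiset.coe_nodup]; exact hnodup a ha)
      (by rw [Multiset.coe_nodup]; exact hnodup b hb)]
    intro y
    rw [Multiset.mem_coe, Multiset.mem_coe, hmem a ha y, hmem b hb y]
  have : coinList n p a = ((List.range' 1 n).map a).map p := by
    rw [coinList, List.map_map]; rfl
  rw [this]
  have : coinList n p b = ((List.range' 1 n).map b).map p := by
    rw [coinList, List.map_map]; rfl
  rw [this]
  exact hperm.map p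

lemma greedy_transfer (n : ℕ) (p : ℕ → ℝ) (b : ℕ → ℕ) (hb : IsGreedy n p b) :
    ∀ (m k : ℕ), 1 ≤ k → k + m = n + 1 →
      GreedyL (z1 p b k) (z0 p b k) ((List.range' k m).map (fun i => p (b i))) := by
  intro m
  induction m with
  | zero => intro k _ _; trivial
  | succ m ih =>
    intro k hk hkm
    rw [List.range'_succ, List.map_cons]
    have hkn : k ≤ n := by omega
    refine ⟨⟨?_, ?_⟩, ?_⟩
    · intro hvu y hy
      rcases List.mem_map.mp hy with ⟨j, hj, rfl⟩
      rw [List.mem_range'_1] at hj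
      exact (hb.2 k hk hkn).1 hvu j (by omega) (by omega)
    · intro hvu y hy
      rcases List.mem_map.mp hy with ⟨j, hj, rfl⟩
      rw [List.mem_range'_1] at hj
      exact (hb.2 k hk hkn).2 hvu j (by omega) (by omega)
    · rw [← z1_succ p b k hk, ← z0_succ p b k hk]
      exact ih (k + 1) (by omega) (by omega)

lemma greedyL_coinList (n : ℕ) (p : ℕ → ℝ) (b : ℕ → ℕ) (hb : IsGreedy n p b) :
    GreedyL 1 1 (coinList n p b) := by
  have h1 : z1 p b 1 = 1 := by simp [z1]
  have h0 : z0 p b 1 = 1 := by simp [z0]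
  have := greedy_transfer n p b hb n 1 le_rfl (by omega)
  rwa [h1, h0] at this

lemma coinList_entries (n : ℕ) (p : ℕ → ℝ)
    (hp : ∀ i, 1 ≤ i → i ≤ n → 0 ≤ p i ∧ p i ≤ 1) (x : ℕ → ℕ) (hx : IsOrdering n x) :
    ∀ y ∈ coinList n p x, 0 ≤ y ∧ y ≤ 1 := by
  intro y hy
  rcases List.mem_map.mp hy with ⟨i, hi, rfl⟩
  rw [List.mem_range'_1] at hi
  have hmem := hx.mapsTo (x := i) (by rw [Set.mem_Icc]; omega)
  rw [Set.mem_Icc] at hmem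
  exact hp (x i) hmem.1 hmem.2

end GreedyAux

open GreedyAux in
/-- A greedy ordering costs at most 1 more than any ordering; in particular its
cost exceeds the minimum cost over all orderings by at most 1. -/
theorem greedy_cost_le_optimal_add_one (n : ℕ) (hn : 2 ≤ n) (p : ℕ → ℝ)
    (hp : ∀ i, 1 ≤ i → i ≤ n → 0 ≤ p i ∧ p i ≤ 1)
    (b : ℕ → ℕ) (hb : IsGreedy n p b)
    (a : ℕ → ℕ) (ha : IsOrdering n a) :
    cost n p b ≤ cost n p a + 1 := by
  have hcb := cost_eq_asum n hn p b
  have hca := cost_eq_asum n hn p a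
  have hend_b1 := endterm_eq n p b hb.1
  have hend_a1 := endterm_eq n p a ha
  have hend_b0 := endterm_eq' n p b hb.1
  have hend_a0 := endterm_eq' n p a ha
  have hperm := coinList_perm n p a b ha hb.1
  have hne : coinList n p b ≠ [] := by
    simp only [coinList]
    intro h
    have : (List.range' 1 n).length = 0 := by
      have := congrArg List.length h
      simpa using this
    rw [List.length_range'] at this
    omega
  have hmain := main_list (coinList n p b) (coinList n p a) hperm hne
    (coinList_entries n p hp b hb.1) (greedyL_coinList n p b hb)
  rw [hcb, hca, hend_b1, hend_a1, hend_b0, hend_a0]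
  linarith
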